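/- Let P be a probability distribution on ℝ^d × ℝ^L supported on points z = (x, y) with ‖x‖₂ ≤ R, and such that 0 ≤ ⟨y, y'⟩ ≤ L̄ for any two points in the support. Let n be even, let z_1, …, z_n be i.i.d. samples from P, and let ε_1, …, ε_{n/2} be i.i.d. Rademacher variables independent of the data. Then the Rademacher average of the loss class satisfies R_{n/2}(ℓ̄ ∘ Ã(r)) := E[ sup_{A ∈ Ã(r)} (2/n) Σ_{i=1}^{n/2} ε_i · g(⟨y_i, y_{n/2+i}⟩)·(⟨y_i, y_{n/2+i}⟩ − x_iᵀ A x_{n/2+i})² ] ≤ 2(r R² + L̄) · R_{n/2}(Ã(r)), where R_{n/2}(Ã(r)) := E[ sup_{A ∈ Ã(r)} (2/n) Σ_{i=1}^{n/2} ε_i · x_iᵀ A x_{n/2+i} ]. -/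

import Mathlib

open MeasureTheory Finset
open scoped ENNReal

noncomputable section

/-- A labeled data point z = (x, y) ∈ ℝ^d × ℝ^L. -/
abbrev Pt (d L : ℕ) := (Fin d → ℝ) × (Fin L → ℝ)

/-- Inner product ⟨y, y'⟩ of label vectors. -/
def ipY {L : ℕ} (y y' : Fin L → ℝ) : ℝ := ∑ i, y i * y' i

/-- Bilinear form xᵀ A x'. -/
def qForm {d : ℕ} (A : Matrix (Fin d) (Fin d) ℝ) (x x' : Fin d → ℝ) : ℝ :=
  ∑ i, ∑ j, x i * A i j * x' j

/-- Euclidean norm ‖x‖₂. -/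
def norm2 {d : ℕ} (x : Fin d → ℝ) : ℝ := Real.sqrt (∑ i, x i ^ 2)

/-- Frobenius norm ‖A‖_F. -/
def frobNorm {d : ℕ} (A : Matrix (Fin d) (Fin d) ℝ) : ℝ :=
  Real.sqrt (∑ i, ∑ j, (A i j) ^ 2)

/-- Loss ℓ(A; z, z') := g(⟨y, y'⟩)·(⟨y, y'⟩ − xᵀ A x')² + λ·Tr(A). -/
def lossFn {d L : ℕ} (g : ℝ → ℝ) (lam : ℝ) (A : Matrix (Fin d) (Fin d) ℝ)
    (z z' : Pt d L) : ℝ :=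
  g (ipY z.2 z'.2) * (ipY z.2 z'.2 - qForm A z.1 z'.1) ^ 2 + lam * A.trace

/-- Empirical risk L̂(A; D) := (1/(n(n−1))) Σᵢ Σ_{j≠i} ℓ(A; zᵢ, zⱼ). -/
def empRisk {d L : ℕ} (g : ℝ → ℝ) (lam : ℝ) {n : ℕ} (A : Matrix (Fin d) (Fin d) ℝ)
    (D : Fin n → Pt d L) : ℝ :=
  (1 / ((n : ℝ) * ((n : ℝ) - 1))) * ∑ i, ∑ j ∈ univ.erase i, lossFn g lam A (D i) (D j)

/-- Population risk L(A) := E_{z,z' i.i.d. ∼ P}[ℓ(A; z, z')]. -/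
def popRisk {d L : ℕ} (g : ℝ → ℝ) (lam : ℝ) (P : Measure (Pt d L))
    (A : Matrix (Fin d) (Fin d) ℝ) : ℝ :=
  ∫ z, (∫ z', lossFn g lam A z z' ∂P) ∂P

/-- Risk relative to the training set, L̃(A; D) := (1/n) Σₖ E_{z∼P}[ℓ(A; z, zₖ)]. -/
def tilRisk {d L : ℕ} (g : ℝ → ℝ) (lam : ℝ) (P : Measure (Pt d L)) {n : ℕ}
    (A : Matrix (Fin d) (Fin d) ℝ) (D : Fin n → Pt d L) : ℝ :=
  (1 / (n : ℝ)) * ∑ k, ∫ z, lossFn g lam A z (D k) ∂P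

/-- Law of a Rademacher random variable: uniform on {−1, +1}. -/
def radMeasure : Measure ℝ :=
  (2⁻¹ : ℝ≥0∞) • Measure.dirac (-1) + (2⁻¹ : ℝ≥0∞) • Measure.dirac 1



open scoped Classical

def sgn (b : Bool) : ℝ := if b then 1 else -1

def signsV {m : ℕ} (s : Fin m → Bool) : Fin m → ℝ := fun i => sgn (s i)

abbrev Kls (d : ℕ) (r : ℝ) := {A : Matrix (Fin d) (Fin d) ℝ // A.PosSemidef ∧ frobNorm A ≤ r}


instance : IsProbabilityMeasure radMeasure :=
  ⟨by simp [radMeasure, ENNReal.inv_two_add_inv_two]⟩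

lemma radPi_eq (m : ℕ) :
    (Measure.pi fun _ : Fin m => radMeasure) =
    ∑ s : Fin m → Bool, ((2 : ℝ≥0∞) ^ m)⁻¹ • Measure.dirac (signsV s) := by
  refine Measure.pi_eq (μ := fun _ : Fin m => radMeasure) fun t ht => ?_
  rw [Measure.finset_sum_apply]
  have h1 : ∀ s : Fin m → Bool,
      (((2 : ℝ≥0∞) ^ m)⁻¹ • Measure.dirac (signsV s)) (Set.pi Set.univ t)
        = ((2 : ℝ≥0∞) ^ m)⁻¹ * ∏ i, (if sgn (s i) ∈ t i then (1:ℝ≥0∞) else 0) := by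
    intro s
    rw [Measure.smul_apply, Measure.dirac_apply' _ (MeasurableSet.univ_pi ht)]
    simp only [smul_eq_mul]
    congr 1
    by_cases h : signsV s ∈ Set.pi Set.univ t
    · rw [Set.indicator_of_mem h, Pi.one_apply, eq_comm]
      exact Finset.prod_eq_one fun i _ => if_pos (h i (Set.mem_univ i))
    · rw [Set.indicator_of_notMem h, eq_comm]
      rw [Set.mem_univ_pi] at h; push_neg at h
      obtain ⟨i, hi⟩ := h
      exact Finset.prod_eq_zero (Finset.mem_univ i) (if_neg hi)
  simp only [h1]
  rw [← Finset.mul_sum]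
  symm
  have h2 : ∀ i : Fin m, radMeasure (t i)
      = ∑ b : Bool, 2⁻¹ * (if sgn b ∈ t i then (1:ℝ≥0∞) else 0) := by
    intro i
    rw [radMeasure, Measure.add_apply, Measure.smul_apply, Measure.smul_apply,
      Measure.dirac_apply' _ (ht i), Measure.dirac_apply' _ (ht i)]
    rw [Fintype.sum_bool]
    simp only [sgn, if_true, if_false, Bool.cond_true]
    simp [Set.indicator_apply]
    ring
  calc ∏ i, radMeasure (t i)
      = ∏ i, ∑ b : Bool, 2⁻¹ * (if sgn b ∈ t i then (1:ℝ≥0∞) else 0) := by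
        exact Finset.prod_congr rfl fun i _ => h2 i
    _ = ∑ s ∈ Fintype.piFinset (fun _ : Fin m => (Finset.univ : Finset Bool)),
          ∏ i, 2⁻¹ * (if sgn (s i) ∈ t i then (1:ℝ≥0∞) else 0) := by
        exact Finset.prod_univ_sum _ _
    _ = ((2 : ℝ≥0∞) ^ m)⁻¹ * ∑ s : Fin m → Bool, ∏ i, (if sgn (s i) ∈ t i then (1:ℝ≥0∞) else 0) := by
        rw [Fintype.piFinset_univ, Finset.mul_sum]
        refine Finset.sum_congr rfl fun s _ => ?_
        rw [Finset.prod_mul_distrib, Finset.prod_const]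
        congr 1
        simp [ENNReal.inv_pow]

lemma integrable_smul_dirac {α E : Type*} [MeasurableSpace α] [MeasurableSingletonClass α]
    [NormedAddCommGroup E] (f : α → E) (a : α) (c : ℝ≥0∞) (hc : c ≠ ∞) :
    Integrable f (c • Measure.dirac a) := by
  have h : f =ᵐ[Measure.dirac a] fun _ => f a := by
    rw [Filter.EventuallyEq, MeasureTheory.ae_dirac_eq]
    exact Filter.eventually_pure.2 rfl
  exact ((integrable_const (f a)).congr h.symm).smul_measure hc

lemma integral_radPi (m : ℕ) (f : (Fin m → ℝ) → ℝ) :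
    ∫ e, f e ∂(Measure.pi fun _ : Fin m => radMeasure)
      = ∑ s : Fin m → Bool, ((2:ℝ)^m)⁻¹ * f (signsV s) := by
  rw [radPi_eq, integral_finset_sum_measure (fun s _ =>
    integrable_smul_dirac f (signsV s) _ (by simp))]
  refine Finset.sum_congr rfl fun s _ => ?_
  rw [integral_smul_measure, integral_dirac]
  simp [ENNReal.toReal_inv, smul_eq_mul]

lemma abs_sgn (b : Bool) : |sgn b| = 1 := by cases b <;> simp [sgn]

lemma sgn_not (b : Bool) : sgn (!b) = -sgn b := by cases b <;> simp [sgn]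

lemma sup_step {K : Type*} [Nonempty K] (F φ q : K → ℝ) (Kc : ℝ)
    (hlip : ∀ a b, |φ a - φ b| ≤ Kc * |q a - q b|)
    (h1 : BddAbove (Set.range fun a => F a + φ a))
    (h2 : BddAbove (Set.range fun a => F a - φ a))
    (h3 : BddAbove (Set.range fun a => F a + Kc * q a))
    (h4 : BddAbove (Set.range fun a => F a - Kc * q a)) :
    (⨆ a, F a + φ a) + (⨆ a, F a - φ a)
      ≤ (⨆ a, F a + Kc * q a) + (⨆ a, F a - Kc * q a) := by
  set RHS := (⨆ a, F a + Kc * q a) + (⨆ a, F a - Kc * q a) with hRHS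
  have key : ∀ a b, (F a + φ a) + (F b - φ b) ≤ RHS := by
    intro a b
    rcases le_total (q b) (q a) with h | h
    · have hd : φ a - φ b ≤ Kc * (q a - q b) := by
        have := (le_abs_self (φ a - φ b)).trans (hlip a b)
        rwa [abs_of_nonneg (sub_nonneg.2 h)] at this
      have e1 : F a + Kc * q a ≤ ⨆ a, F a + Kc * q a := le_ciSup h3 a
      have e2 : F b - Kc * q b ≤ ⨆ a, F a - Kc * q a := le_ciSup h4 b
      linarith
    · have hd : φ a - φ b ≤ Kc * (q b - q a) := by
        have := (le_abs_self (φ a - φ b)).trans (hlip a b)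
        rwa [abs_of_nonpos (sub_nonpos.2 h), neg_sub] at this
      have e1 : F b + Kc * q b ≤ ⨆ a, F a + Kc * q a := le_ciSup h3 b
      have e2 : F a - Kc * q a ≤ ⨆ a, F a - Kc * q a := le_ciSup h4 a
      linarith
  have step1 : ∀ a, F a + φ a ≤ RHS - (⨆ b, F b - φ b) := by
    intro a
    have : (⨆ b, F b - φ b) ≤ RHS - (F a + φ a) :=
      ciSup_le fun b => by linarith [key a b]
    linarith
  have := ciSup_le step1
  linarith

lemma contraction {m : ℕ} {K : Type*} [Nonempty K]
    (φ p : Fin m → K → ℝ) (Kc : ℝ) (hKc : 0 ≤ Kc)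
    (hlip : ∀ i a b, |φ i a - φ i b| ≤ Kc * |p i a - p i b|)
    (M : ℝ) (hM : 0 ≤ M) (hbd : ∀ i a, |φ i a| ≤ M ∧ |p i a| ≤ M) :
    ∑ s : Fin m → Bool, ⨆ a : K, ∑ i, sgn (s i) * φ i a
      ≤ ∑ s : Fin m → Bool, ⨆ a : K, ∑ i, sgn (s i) * (Kc * p i a) := by
  set h : Finset (Fin m) → (Fin m → Bool) → K → ℝ :=
    fun t s a => ∑ i, sgn (s i) * (if i ∈ t then Kc * p i a else φ i a) with hh
  have hb : ∀ t s, BddAbove (Set.range fun a : K => h t s a) := by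
    intro t s
    refine ⟨(m : ℝ) * ((1 + Kc) * M), ?_⟩
    rintro _ ⟨a, rfl⟩
    calc h t s a ≤ ∑ i : Fin m, |sgn (s i) * (if i ∈ t then Kc * p i a else φ i a)| :=
          Finset.sum_le_sum fun i _ => le_abs_self _
      _ ≤ ∑ _i : Fin m, (1 + Kc) * M := by
          refine Finset.sum_le_sum fun i _ => ?_
          rw [abs_mul, abs_sgn, one_mul]
          by_cases hi : i ∈ t
          · rw [if_pos hi, abs_mul, abs_of_nonneg hKc]
            nlinarith [(hbd i a).2, abs_nonneg (p i a)]
          · rw [if_neg hi]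
            nlinarith [(hbd i a).1]
      _ = (m : ℝ) * ((1 + Kc) * M) := by
          rw [Finset.sum_const]
          simp [Finset.card_univ, nsmul_eq_mul]
  set E : Finset (Fin m) → ℝ := fun t => ∑ s : Fin m → Bool, ⨆ a : K, h t s a with hE
  have step : ∀ (i : Fin m) (t : Finset (Fin m)), i ∉ t → E t ≤ E (insert i t) := by
    intro i t hit
    set fl : (Fin m → Bool) → (Fin m → Bool) := fun s => Function.update s i (!(s i)) with hfl
    have hinv : Function.Involutive fl := by
      intro s
      funext j
      by_cases hj : j = i
      · subst hj; simp [hfl, Function.update_self]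
      · simp [hfl, Function.update_of_ne hj]
    have hsum_fl : ∀ (u : (Fin m → Bool) → ℝ), ∑ s, u (fl s) = ∑ s, u s :=
      fun u => Fintype.sum_equiv hinv.toPerm _ _ fun s => rfl
    have pair : ∀ s : Fin m → Bool,
        (⨆ a : K, h t s a) + (⨆ a : K, h t (fl s) a)
          ≤ (⨆ a : K, h (insert i t) s a) + (⨆ a : K, h (insert i t) (fl s) a) := by
      intro s
      set F : K → ℝ := fun a => ∑ j ∈ Finset.univ.erase i,
        sgn (s j) * (if j ∈ t then Kc * p j a else φ j a) with hF
      set φK : K → ℝ := fun a => sgn (s i) * φ i a with hφK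
      set qK : K → ℝ := fun a => sgn (s i) * p i a with hqK
      have hts : (fun a : K => h t s a) = fun a => F a + φK a := by
        funext a
        rw [hh]
        simp only
        rw [← Finset.add_sum_erase _ _ (Finset.mem_univ i), if_neg hit]
        simp only [hF, hφK]
        ring_nf
      have htfl : (fun a : K => h t (fl s) a) = fun a => F a - φK a := by
        funext a
        rw [hh]
        simp only
        rw [← Finset.add_sum_erase _ _ (Finset.mem_univ i), if_neg hit]
        have h1 : sgn (fl s i) = -sgn (s i) := by
          simp [hfl, Function.update_self, sgn_not]
        have h2 : ∀ j ∈ Finset.univ.erase i, sgn (fl s j) *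
            (if j ∈ t then Kc * p j a else φ j a) = sgn (s j) *
            (if j ∈ t then Kc * p j a else φ j a) := by
          intro j hj
          rw [hfl]
          simp only
          rw [Function.update_of_ne (Finset.mem_erase.1 hj).1]
        rw [Finset.sum_congr rfl h2, h1]
        simp only [hF, hφK]
        ring
      have hts' : (fun a : K => h (insert i t) s a) = fun a => F a + Kc * qK a := by
        funext a
        rw [hh]
        simp only
        rw [← Finset.add_sum_erase _ _ (Finset.mem_univ i), if_pos (Finset.mem_insert_self i t)]
        have h2 : ∀ j ∈ Finset.univ.erase i, sgn (s j) *
            (if j ∈ insert i t then Kc * p j a else φ j a) = sgn (s j) *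
            (if j ∈ t then Kc * p j a else φ j a) := by
          intro j hj
          congr 1
          have := (Finset.mem_erase.1 hj).1
          by_cases hjt : j ∈ t
          · rw [if_pos hjt, if_pos (Finset.mem_insert_of_mem hjt)]
          · rw [if_neg hjt, if_neg (by simp [Finset.mem_insert, this, hjt])]
        rw [Finset.sum_congr rfl h2]
        rw [hqK]
        simp only [hF]
        ring_nf
      have htfl' : (fun a : K => h (insert i t) (fl s) a) = fun a => F a - Kc * qK a := by
        funext a
        rw [hh]
        simp only
        rw [← Finset.add_sum_erase _ _ (Finset.mem_univ i), if_pos (Finset.mem_insert_self i t)]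
        have h1 : sgn (fl s i) = -sgn (s i) := by
          simp [hfl, Function.update_self, sgn_not]
        have h2 : ∀ j ∈ Finset.univ.erase i, sgn (fl s j) *
            (if j ∈ insert i t then Kc * p j a else φ j a) = sgn (s j) *
            (if j ∈ t then Kc * p j a else φ j a) := by
          intro j hj
          have hji := (Finset.mem_erase.1 hj).1
          rw [hfl]
          simp only
          rw [Function.update_of_ne hji]
          congr 1
          by_cases hjt : j ∈ t
          · rw [if_pos hjt, if_pos (Finset.mem_insert_of_mem hjt)]
          · rw [if_neg hjt, if_neg (by simp [Finset.mem_insert, hji, hjt])]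
        rw [Finset.sum_congr rfl h2, h1, hqK]
        simp only [hF]
        ring
      have hlipK : ∀ a b, |φK a - φK b| ≤ Kc * |qK a - qK b| := by
        intro a b
        rw [hφK, hqK]
        simp only
        rw [← mul_sub, ← mul_sub, abs_mul, abs_mul, abs_sgn, one_mul, one_mul]
        exact hlip i a b
      have b1 : BddAbove (Set.range fun a : K => F a + φK a) := hts ▸ hb t s
      have b2 : BddAbove (Set.range fun a : K => F a - φK a) := htfl ▸ hb t (fl s)
      have b3 : BddAbove (Set.range fun a : K => F a + Kc * qK a) := hts' ▸ hb (insert i t) s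
      have b4 : BddAbove (Set.range fun a : K => F a - Kc * qK a) :=
        htfl' ▸ hb (insert i t) (fl s)
      calc (⨆ a : K, h t s a) + (⨆ a : K, h t (fl s) a)
          = (⨆ a, F a + φK a) + (⨆ a, F a - φK a) := by rw [hts, htfl]
        _ ≤ (⨆ a, F a + Kc * qK a) + (⨆ a, F a - Kc * qK a) :=
            sup_step F φK qK Kc hlipK b1 b2 b3 b4
        _ = (⨆ a : K, h (insert i t) s a) + (⨆ a : K, h (insert i t) (fl s) a) := by
            rw [hts', htfl']
    have h2E : 2 * E t ≤ 2 * E (insert i t) := by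
      have lhs : 2 * E t = ∑ s : Fin m → Bool, ((⨆ a : K, h t s a) + (⨆ a : K, h t (fl s) a)) := by
        rw [Finset.sum_add_distrib, hsum_fl (fun s => ⨆ a : K, h t s a)]
        rw [hE]; ring
      have rhs : 2 * E (insert i t) = ∑ s : Fin m → Bool,
          ((⨆ a : K, h (insert i t) s a) + (⨆ a : K, h (insert i t) (fl s) a)) := by
        rw [Finset.sum_add_distrib, hsum_fl (fun s => ⨆ a : K, h (insert i t) s a)]
        rw [hE]; ring
      rw [lhs, rhs]
      exact Finset.sum_le_sum fun s _ => pair s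
    linarith
  have main : ∀ t : Finset (Fin m), E ∅ ≤ E t := by
    intro t
    induction t using Finset.induction_on with
    | empty => exact le_rfl
    | insert _ _ hnotmem ih => exact ih.trans (step _ _ hnotmem)
  have := main Finset.univ
  have e1 : E ∅ = ∑ s : Fin m → Bool, ⨆ a : K, ∑ i, sgn (s i) * φ i a := by
    rw [hE]
    refine Finset.sum_congr rfl fun s _ => ?_
    refine iSup_congr fun a => Finset.sum_congr rfl fun i _ => ?_
    rw [if_neg (Finset.notMem_empty i)]
  have e2 : E Finset.univ = ∑ s : Fin m → Bool, ⨆ a : K, ∑ i, sgn (s i) * (Kc * p i a) := by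
    rw [hE]
    refine Finset.sum_congr rfl fun s _ => ?_
    refine iSup_congr fun a => Finset.sum_congr rfl fun i _ => ?_
    rw [if_pos (Finset.mem_univ i)]
  rw [e1, e2] at this
  exact this

lemma cs_sum {d : ℕ} (f g : Fin d → ℝ) :
    ∑ i, f i * g i ≤ Real.sqrt (∑ i, f i ^ 2) * Real.sqrt (∑ i, g i ^ 2) := by
  have h := Finset.sum_mul_sq_le_sq_mul_sq Finset.univ f g
  have h0 : 0 ≤ (∑ i, f i ^ 2) * ∑ i, g i ^ 2 :=
    mul_nonneg (Finset.sum_nonneg fun i _ => sq_nonneg _)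
      (Finset.sum_nonneg fun i _ => sq_nonneg _)
  calc ∑ i, f i * g i ≤ |∑ i, f i * g i| := le_abs_self _
    _ = Real.sqrt ((∑ i, f i * g i) ^ 2) := (Real.sqrt_sq_eq_abs _).symm
    _ ≤ Real.sqrt ((∑ i, f i ^ 2) * ∑ i, g i ^ 2) := Real.sqrt_le_sqrt h
    _ = _ := Real.sqrt_mul (Finset.sum_nonneg fun i _ => sq_nonneg _) _

lemma qForm_abs_le {d : ℕ} (A : Matrix (Fin d) (Fin d) ℝ) (x x' : Fin d → ℝ) :
    |qForm A x x'| ≤ frobNorm A * (norm2 x * norm2 x') := by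
  have key : ∀ y : Fin d → ℝ, qForm A y x' ≤ frobNorm A * (norm2 y * norm2 x') := by
    intro y
    have h1 : qForm A y x' = ∑ i, y i * ∑ j, A i j * x' j := by
      rw [qForm]
      refine Finset.sum_congr rfl fun i _ => ?_
      rw [Finset.mul_sum]
      exact Finset.sum_congr rfl fun j _ => by ring
    have h2 : qForm A y x' ≤ Real.sqrt (∑ i, y i ^ 2) *
        Real.sqrt (∑ i, (∑ j, A i j * x' j) ^ 2) := by
      rw [h1]; exact cs_sum _ _
    have h3 : ∑ i, (∑ j, A i j * x' j) ^ 2 ≤ (∑ i, ∑ j, A i j ^ 2) * ∑ j, x' j ^ 2 := by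
      rw [Finset.sum_mul]
      refine Finset.sum_le_sum fun i _ => ?_
      exact Finset.sum_mul_sq_le_sq_mul_sq Finset.univ _ _
    have h4 : Real.sqrt (∑ i, (∑ j, A i j * x' j) ^ 2)
        ≤ frobNorm A * norm2 x' := by
      exact (Real.sqrt_le_sqrt h3).trans_eq (Real.sqrt_mul (Finset.sum_nonneg fun i _ =>
        Finset.sum_nonneg fun j _ => sq_nonneg _) _)
    calc qForm A y x' ≤ Real.sqrt (∑ i, y i ^ 2) *
          Real.sqrt (∑ i, (∑ j, A i j * x' j) ^ 2) := h2
      _ ≤ Real.sqrt (∑ i, y i ^ 2) * (frobNorm A * norm2 x') := by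
          exact mul_le_mul_of_nonneg_left h4 (Real.sqrt_nonneg _)
      _ = frobNorm A * (norm2 y * norm2 x') := by rw [norm2, norm2]; ring
  rcases abs_cases (qForm A x x') with ⟨he, _⟩ | ⟨he, _⟩
  · rw [he]; exact key x
  · rw [he]
    have hneg : -qForm A x x' = qForm A (fun i => -x i) x' := by
      rw [qForm, qForm, ← Finset.sum_neg_distrib]
      refine Finset.sum_congr rfl fun i _ => ?_
      rw [← Finset.sum_neg_distrib]
      exact Finset.sum_congr rfl fun j _ => by ring
    have hn2 : norm2 (fun i => -x i) = norm2 x := by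
      rw [norm2, norm2]
      congr 1
      exact Finset.sum_congr rfl fun i _ => by ring
    rw [hneg, ← hn2]
    exact key _

instance matSC {d : ℕ} : SecondCountableTopology (Matrix (Fin d) (Fin d) ℝ) :=
  inferInstanceAs (SecondCountableTopology (Fin d → Fin d → ℝ))

lemma measurable_iSup_K {d : ℕ} {r : ℝ} {α : Type*} [MeasurableSpace α]
    [Nonempty (Kls d r)]
    (v : α → Kls d r → ℝ)
    (hm : ∀ A, Measurable (fun z => v z A))
    (hc : ∀ z, Continuous (v z))
    (hbd : ∀ z, BddAbove (Set.range fun A : Kls d r => v z A)) :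
    Measurable fun z => ⨆ A : Kls d r, v z A := by
  haveI : SecondCountableTopology (Kls d r) :=
    TopologicalSpace.Subtype.secondCountableTopology
      {A : Matrix (Fin d) (Fin d) ℝ | A.PosSemidef ∧ frobNorm A ≤ r}
  obtain ⟨D, hDc, hDd⟩ := TopologicalSpace.exists_countable_dense (Kls d r)
  have hDne : D.Nonempty := hDd.nonempty
  obtain ⟨f, hf⟩ := hDc.exists_eq_range hDne
  set q : ℕ → α → ℝ := fun n => Nat.rec (fun z => v z (f 0))
    (fun n qn z => max (qn z) (v z (f (n+1)))) n with hq
  have hqs : ∀ n z, q (n+1) z = max (q n z) (v z (f (n+1))) := fun n z => rfl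
  have hqm : ∀ n, Measurable (q n) := by
    intro n
    induction n with
    | zero => exact hm _
    | succ n ih => exact Measurable.max ih (hm _)
  have hmono : ∀ z, Monotone fun n => q n z := by
    intro z
    refine monotone_nat_of_le_succ fun n => ?_
    rw [hqs]; exact le_max_left _ _
  have hqle : ∀ n z, q n z ≤ ⨆ A : Kls d r, v z A := by
    intro n z
    induction n with
    | zero => exact le_ciSup (hbd z) (f 0)
    | succ n ih => exact max_le ih (le_ciSup (hbd z) (f (n+1)))
  have hvq : ∀ n z, v z (f n) ≤ q n z := by
    intro n z
    cases n with
    | zero => exact le_of_eq rfl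
    | succ n => rw [hqs]; exact le_max_right _ _
  have hlim : ∀ z, Filter.Tendsto (fun n => q n z) Filter.atTop
      (nhds (⨆ A : Kls d r, v z A)) := by
    intro z
    have hbq : BddAbove (Set.range fun n => q n z) := by
      refine ⟨⨆ A : Kls d r, v z A, ?_⟩
      rintro _ ⟨n, rfl⟩
      exact hqle n z
    have h1 := tendsto_atTop_ciSup (hmono z) hbq
    have h2 : (⨆ n, q n z) = ⨆ A : Kls d r, v z A := by
      apply le_antisymm
      · exact ciSup_le fun n => hqle n z
      · refine ciSup_le fun A => ?_
        have hAcl : (A : Kls d r) ∈ closure D := hDd A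
        have himg : v z A ∈ closure (Set.range fun n => v z (f n)) := by
          have : (Set.range fun n => v z (f n)) = (fun B : Kls d r => v z B) '' D := by
            rw [hf, ← Set.range_comp]; rfl
          rw [this]
          exact map_mem_closure (f := fun B : Kls d r => v z B) (hc z) hAcl (Set.mapsTo_image _ _)
        have hsub : closure (Set.range fun n => v z (f n))
            ⊆ Set.Iic (⨆ n, q n z) := by
          refine closure_minimal ?_ isClosed_Iic
          rintro _ ⟨n, rfl⟩
          exact (hvq n z).trans (le_ciSup hbq n)
        exact hsub himg
    exact h2 ▸ h1
  exact measurable_of_tendsto_metrizable hqm (tendsto_pi_nhds.2 hlim)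

lemma kls_nonempty {d : ℕ} {r : ℝ} (hr : 0 ≤ r) : Nonempty (Kls d r) :=
  ⟨⟨0, Matrix.PosSemidef.zero, by simp [frobNorm, Matrix.zero_apply, hr]⟩⟩

lemma qForm_zero {d : ℕ} (x x' : Fin d → ℝ) :
    qForm (0 : Matrix (Fin d) (Fin d) ℝ) x x' = 0 := by
  simp [qForm]

lemma q_bound {d : ℕ} {r R : ℝ} (hr : 0 ≤ r) (hR : 0 ≤ R)
    (A : Kls d r) {x x' : Fin d → ℝ} (hx : norm2 x ≤ R) (hx' : norm2 x' ≤ R) :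
    |qForm A.1 x x'| ≤ r * R ^ 2 := by
  have h := qForm_abs_le A.1 x x'
  have h1 : norm2 x ≥ 0 := Real.sqrt_nonneg _
  have h2 : norm2 x' ≥ 0 := Real.sqrt_nonneg _
  have h3 : frobNorm A.1 ≥ 0 := Real.sqrt_nonneg _
  have h4 : frobNorm A.1 ≤ r := A.2.2
  have h5 : norm2 x * norm2 x' ≤ R * R := mul_le_mul hx hx' h2 hR
  calc |qForm A.1 x x'| ≤ frobNorm A.1 * (norm2 x * norm2 x') := h
    _ ≤ r * (R * R) := mul_le_mul h4 h5 (mul_nonneg h1 h2) hr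
    _ = r * R ^ 2 := by ring

lemma main_ineq {d : ℕ} {r R Lbar : ℝ} (hr : 0 < r) (hR : 0 < R) (hLbar : 0 ≤ Lbar)
    (g : ℝ → ℝ) (hg : ∀ t, 0 ≤ g t ∧ g t ≤ 1)
    {m : ℕ} (hm : 0 < m)
    (c : Fin m → ℝ) (xa xb : Fin m → Fin d → ℝ)
    (hc : ∀ i, 0 ≤ c i ∧ c i ≤ Lbar)
    (hxa : ∀ i, norm2 (xa i) ≤ R) (hxb : ∀ i, norm2 (xb i) ≤ R) :
    ∑ s : Fin m → Bool, ((2:ℝ)^m)⁻¹ * ⨆ A : Kls d r,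
        (2 / ((2*m : ℕ) : ℝ)) * ∑ i, sgn (s i) * g (c i) * (c i - qForm A.1 (xa i) (xb i))^2
      ≤ 2 * (r * R^2 + Lbar) * ∑ s : Fin m → Bool, ((2:ℝ)^m)⁻¹ * ⨆ A : Kls d r,
        (2 / ((2*m : ℕ) : ℝ)) * ∑ i, sgn (s i) * qForm A.1 (xa i) (xb i) := by
  haveI : Nonempty (Kls d r) := kls_nonempty hr.le
  have hmne : ((m : ℝ)) ≠ 0 := Nat.cast_ne_zero.2 hm.ne'
  have hm2 : (2 : ℝ) / ((2*m : ℕ) : ℝ) = (m : ℝ)⁻¹ := by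
    push_cast
    field_simp
  set Kc : ℝ := 2 * (r * R^2 + Lbar) with hKcdef
  have hKc : 0 ≤ Kc := by positivity
  set φ : Fin m → Kls d r → ℝ :=
    fun i A => (m:ℝ)⁻¹ * (g (c i) * (c i - qForm A.1 (xa i) (xb i))^2) with hφ
  set p : Fin m → Kls d r → ℝ := fun i A => (m:ℝ)⁻¹ * qForm A.1 (xa i) (xb i) with hp
  have hqb : ∀ (i : Fin m) (A : Kls d r), |qForm A.1 (xa i) (xb i)| ≤ r * R^2 :=
    fun i A => q_bound hr.le hR.le A (hxa i) (hxb i)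
  have hminv : (0:ℝ) ≤ (m:ℝ)⁻¹ := by positivity
  have hlip : ∀ i a b, |φ i a - φ i b| ≤ Kc * |p i a - p i b| := by
    intro i a b
    set qa := qForm a.1 (xa i) (xb i) with hqa
    set qb := qForm b.1 (xa i) (xb i) with hqb'
    have e1 : φ i a - φ i b = (m:ℝ)⁻¹ * (g (c i) * (|qa - qb| * |2*c i - qa - qb|)) ∨
        φ i a - φ i b = -((m:ℝ)⁻¹ * (g (c i) * (|qa - qb| * |2*c i - qa - qb|))) := by
      have hh : φ i a - φ i b = (m:ℝ)⁻¹ * (g (c i) * ((qb - qa) * (2*c i - qa - qb))) := by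
        simp only [hφ]
        ring
      rcases abs_cases (qa - qb) with ⟨ha, _⟩ | ⟨ha, _⟩ <;>
        rcases abs_cases (2*c i - qa - qb) with ⟨hb, _⟩ | ⟨hb, _⟩
      · right; rw [hh, ha, hb]; ring
      · left; rw [hh, ha, hb]; ring
      · left; rw [hh, ha, hb]; ring
      · right; rw [hh, ha, hb]; ring
    have e2 : |p i a - p i b| = (m:ℝ)⁻¹ * |qa - qb| := by
      have : p i a - p i b = (m:ℝ)⁻¹ * (qa - qb) := by simp only [hp]; ring
      rw [this, abs_mul, abs_of_nonneg hminv]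
    have h2 : |2*c i - qa - qb| ≤ Kc := by
      have ha := abs_le.1 (hqb i a)
      have hb := abs_le.1 (hqb i b)
      rw [← hqa] at ha
      rw [← hqb'] at hb
      have hc1 := (hc i).1
      have hc2 := (hc i).2
      rw [abs_le, hKcdef]
      constructor <;> nlinarith
    have hbound : (m:ℝ)⁻¹ * (g (c i) * (|qa - qb| * |2*c i - qa - qb|))
        ≤ Kc * ((m:ℝ)⁻¹ * |qa - qb|) := by
      have hga : g (c i) ≤ 1 := (hg (c i)).2
      have hg0 : (0:ℝ) ≤ g (c i) := (hg (c i)).1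
      have hq0 : (0:ℝ) ≤ |qa - qb| := abs_nonneg _
      calc (m:ℝ)⁻¹ * (g (c i) * (|qa - qb| * |2*c i - qa - qb|))
          ≤ (m:ℝ)⁻¹ * (1 * (|qa - qb| * Kc)) := by
            refine mul_le_mul_of_nonneg_left ?_ hminv
            exact mul_le_mul hga (mul_le_mul_of_nonneg_left h2 hq0)
              (by positivity) one_pos.le
        _ = Kc * ((m:ℝ)⁻¹ * |qa - qb|) := by ring
    rw [e2]
    have h0 : (0:ℝ) ≤ (m:ℝ)⁻¹ * (g (c i) * (|qa - qb| * |2*c i - qa - qb|)) := by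
      have hg0 : (0:ℝ) ≤ g (c i) := (hg (c i)).1
      positivity
    rcases e1 with e | e
    · rw [e, abs_of_nonneg h0]; exact hbound
    · rw [e, abs_neg, abs_of_nonneg h0]; exact hbound
  set M : ℝ := (m:ℝ)⁻¹ * max ((Lbar + r*R^2)^2) (r*R^2) with hMdef
  have hM0 : 0 ≤ M := by positivity
  have hbd : ∀ i a, |φ i a| ≤ M ∧ |p i a| ≤ M := by
    intro i a
    have hqa := abs_le.1 (hqb i a)
    have hc1 := (hc i).1
    have hc2 := (hc i).2
    have hg0 : (0:ℝ) ≤ g (c i) := (hg (c i)).1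
    have hg1 : g (c i) ≤ 1 := (hg (c i)).2
    constructor
    · have habs : |c i - qForm a.1 (xa i) (xb i)| ≤ Lbar + r*R^2 :=
        abs_le.2 ⟨by nlinarith, by nlinarith⟩
      have hsq : (c i - qForm a.1 (xa i) (xb i))^2 ≤ (Lbar + r*R^2)^2 := by
        rw [← sq_abs]
        exact pow_le_pow_left₀ (abs_nonneg _) habs 2
      have hval : |φ i a| = (m:ℝ)⁻¹ * (g (c i) * (c i - qForm a.1 (xa i) (xb i))^2) := by
        simp only [hφ]
        rw [abs_of_nonneg (by positivity)]
      rw [hval, hMdef]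
      refine mul_le_mul_of_nonneg_left ?_ hminv
      calc g (c i) * (c i - qForm a.1 (xa i) (xb i))^2
          ≤ 1 * (Lbar + r*R^2)^2 := mul_le_mul hg1 hsq (sq_nonneg _) one_pos.le
        _ = (Lbar + r*R^2)^2 := one_mul _
        _ ≤ max ((Lbar + r*R^2)^2) (r*R^2) := le_max_left _ _
    · have hval : |p i a| = (m:ℝ)⁻¹ * |qForm a.1 (xa i) (xb i)| := by
        simp only [hp]
        rw [abs_mul, abs_of_nonneg hminv]
      rw [hval, hMdef]
      exact mul_le_mul_of_nonneg_left ((hqb i a).trans (le_max_right _ _)) hminv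
  have hcon := contraction φ p Kc hKc hlip M hM0 hbd
  have h2m : (0:ℝ) ≤ ((2:ℝ)^m)⁻¹ := by positivity
  have eL : ∀ s : Fin m → Bool,
      (⨆ A : Kls d r, (2/((2*m:ℕ):ℝ)) *
          ∑ i, sgn (s i) * g (c i) * (c i - qForm A.1 (xa i) (xb i))^2)
        = ⨆ A : Kls d r, ∑ i, sgn (s i) * φ i A := by
    intro s
    refine iSup_congr fun A => ?_
    rw [hm2, Finset.mul_sum]
    refine Finset.sum_congr rfl fun i _ => ?_
    simp only [hφ]
    ring
  have eR : ∀ s : Fin m → Bool,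
      (⨆ A : Kls d r, ∑ i, sgn (s i) * (Kc * p i A))
        = (⨆ A : Kls d r, (2/((2*m:ℕ):ℝ)) *
            ∑ i, sgn (s i) * qForm A.1 (xa i) (xb i)) * Kc := by
    intro s
    rw [Real.iSup_mul_of_nonneg hKc]
    refine iSup_congr fun A => ?_
    rw [hm2, Finset.mul_sum, Finset.sum_mul]
    refine Finset.sum_congr rfl fun i _ => ?_
    simp only [hp]
    ring
  calc ∑ s : Fin m → Bool, ((2:ℝ)^m)⁻¹ * ⨆ A : Kls d r,
        (2/((2*m:ℕ):ℝ)) * ∑ i, sgn (s i) * g (c i) * (c i - qForm A.1 (xa i) (xb i))^2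
      = ((2:ℝ)^m)⁻¹ * ∑ s : Fin m → Bool, ⨆ A : Kls d r, ∑ i, sgn (s i) * φ i A := by
        rw [← Finset.mul_sum]
        congr 1
        exact Finset.sum_congr rfl fun s _ => eL s
    _ ≤ ((2:ℝ)^m)⁻¹ * ∑ s : Fin m → Bool, ⨆ A : Kls d r, ∑ i, sgn (s i) * (Kc * p i A) :=
        mul_le_mul_of_nonneg_left hcon h2m
    _ = 2 * (r * R^2 + Lbar) * ∑ s : Fin m → Bool, ((2:ℝ)^m)⁻¹ * ⨆ A : Kls d r,
        (2/((2*m:ℕ):ℝ)) * ∑ i, sgn (s i) * qForm A.1 (xa i) (xb i) := by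
        rw [Finset.mul_sum, Finset.mul_sum]
        refine Finset.sum_congr rfl fun s _ => ?_
        rw [eR s, hKcdef]
        ring

lemma sum_sgn {m : ℕ} (i : Fin m) : ∑ s : Fin m → Bool, sgn (s i) = 0 := by
  set fl : (Fin m → Bool) → (Fin m → Bool) := fun s => Function.update s i (!(s i)) with hfl
  have hinv : Function.Involutive fl := by
    intro s
    funext j
    by_cases hj : j = i
    · subst hj; simp [hfl, Function.update_self]
    · simp [hfl, Function.update_of_ne hj]
  have h := Fintype.sum_equiv hinv.toPerm (fun s => sgn (s i)) (fun s => -sgn (s i))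
    (fun s => by
      show sgn (s i) = -sgn (fl s i)
      simp [hfl, Function.update_self, sgn_not])
  rw [Finset.sum_neg_distrib] at h
  linarith

lemma sum_signs_weighted {m : ℕ} (t : Fin m → ℝ) (co w : ℝ) :
    ∑ s : Fin m → Bool, w * (co * ∑ i, sgn (s i) * t i) = 0 := by
  have h1 : ∀ s : Fin m → Bool, w * (co * ∑ i, sgn (s i) * t i)
      = ∑ i, (w * co * t i) * sgn (s i) := by
    intro s
    rw [Finset.mul_sum, Finset.mul_sum]
    exact Finset.sum_congr rfl fun i _ => by ring
  calc ∑ s : Fin m → Bool, w * (co * ∑ i, sgn (s i) * t i)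
      = ∑ s : Fin m → Bool, ∑ i, (w * co * t i) * sgn (s i) :=
        Finset.sum_congr rfl fun s _ => h1 s
    _ = ∑ i, ∑ s : Fin m → Bool, (w * co * t i) * sgn (s i) := Finset.sum_comm
    _ = ∑ i : Fin m, (w * co * t i) * (∑ s : Fin m → Bool, sgn (s i)) := by
        exact Finset.sum_congr rfl fun i _ => (Finset.mul_sum _ _ _).symm
    _ = 0 := by
        refine Finset.sum_eq_zero fun i _ => ?_
        rw [sum_sgn, mul_zero]

lemma q_bound' {d : ℕ} {r : ℝ} (hr : 0 ≤ r) (A : Kls d r) (x x' : Fin d → ℝ) :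
    |qForm A.1 x x'| ≤ r * (norm2 x * norm2 x') := by
  refine (qForm_abs_le A.1 x x').trans ?_
  exact mul_le_mul_of_nonneg_right A.2.2
    (mul_nonneg (Real.sqrt_nonneg _) (Real.sqrt_nonneg _))

lemma norm2_nonneg {d : ℕ} (x : Fin d → ℝ) : 0 ≤ norm2 x := Real.sqrt_nonneg _

lemma co_nonneg (m : ℕ) : (0:ℝ) ≤ 2 / ((2*m : ℕ) : ℝ) := by positivity

lemma co_le_one (m : ℕ) : (2:ℝ) / ((2*m : ℕ) : ℝ) ≤ 1 := by
  rcases Nat.eq_zero_or_pos m with h | h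
  · subst h; norm_num
  · have h1 : (2:ℝ) ≤ ((2*m : ℕ) : ℝ) := by
      have : 2 ≤ 2*m := by omega
      exact_mod_cast this
    rw [div_le_one (by linarith)]
    exact h1

lemma sgn_mul_le_abs (b : Bool) (x : ℝ) : sgn b * x ≤ |x| := by
  cases b <;> simp [sgn] <;> [exact neg_le_abs x; exact le_abs_self x]

lemma bdd_G {d m : ℕ} {r : ℝ} (s : Fin m → Bool) (xa xb : Fin m → Fin d → ℝ) (hr : 0 ≤ r) :
    BddAbove (Set.range fun A : Kls d r =>
      2 / ((2*m : ℕ) : ℝ) * ∑ i, sgn (s i) * qForm A.1 (xa i) (xb i)) := by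
  refine ⟨∑ i : Fin m, r * (norm2 (xa i) * norm2 (xb i)), ?_⟩
  rintro _ ⟨A, rfl⟩
  have hB0 : (0:ℝ) ≤ ∑ i : Fin m, r * (norm2 (xa i) * norm2 (xb i)) :=
    Finset.sum_nonneg fun i _ => mul_nonneg hr
      (mul_nonneg (norm2_nonneg _) (norm2_nonneg _))
  have hsum : ∑ i, sgn (s i) * qForm A.1 (xa i) (xb i)
      ≤ ∑ i : Fin m, r * (norm2 (xa i) * norm2 (xb i)) := by
    refine Finset.sum_le_sum fun i _ => ?_
    have h1 : sgn (s i) * qForm A.1 (xa i) (xb i) ≤ |qForm A.1 (xa i) (xb i)| := by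
      rcases abs_cases (qForm A.1 (xa i) (xb i)) with ⟨he, _⟩ | ⟨he, _⟩ <;>
        cases (s i) <;> simp [sgn, he] <;> linarith [abs_nonneg (qForm A.1 (xa i) (xb i)),
          neg_abs_le (qForm A.1 (xa i) (xb i)), le_abs_self (qForm A.1 (xa i) (xb i))]
    exact h1.trans (q_bound' hr A _ _)
  calc 2 / ((2*m : ℕ) : ℝ) * ∑ i, sgn (s i) * qForm A.1 (xa i) (xb i)
      ≤ 2 / ((2*m : ℕ) : ℝ) * ∑ i : Fin m, r * (norm2 (xa i) * norm2 (xb i)) :=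
        mul_le_mul_of_nonneg_left hsum (co_nonneg m)
    _ ≤ 1 * ∑ i : Fin m, r * (norm2 (xa i) * norm2 (xb i)) :=
        mul_le_mul_of_nonneg_right (co_le_one m) hB0
    _ = _ := one_mul _

lemma bdd_F {d m : ℕ} {r : ℝ} (s : Fin m → Bool) (g : ℝ → ℝ) (hg : ∀ t, 0 ≤ g t ∧ g t ≤ 1)
    (c : Fin m → ℝ) (xa xb : Fin m → Fin d → ℝ) (hr : 0 ≤ r) :
    BddAbove (Set.range fun A : Kls d r =>
      2 / ((2*m : ℕ) : ℝ) * ∑ i, sgn (s i) * g (c i) *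
        (c i - qForm A.1 (xa i) (xb i)) ^ 2) := by
  refine ⟨∑ i : Fin m, (|c i| + r * (norm2 (xa i) * norm2 (xb i))) ^ 2, ?_⟩
  rintro _ ⟨A, rfl⟩
  have hB0 : (0:ℝ) ≤ ∑ i : Fin m, (|c i| + r * (norm2 (xa i) * norm2 (xb i))) ^ 2 :=
    Finset.sum_nonneg fun i _ => sq_nonneg _
  have hsum : ∑ i, sgn (s i) * g (c i) * (c i - qForm A.1 (xa i) (xb i)) ^ 2
      ≤ ∑ i : Fin m, (|c i| + r * (norm2 (xa i) * norm2 (xb i))) ^ 2 := by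
    refine Finset.sum_le_sum fun i _ => ?_
    have hq := abs_le.1 (q_bound' hr A (xa i) (xb i))
    have hcabs := abs_le.1 (le_refl |c i|)
    have habs : |c i - qForm A.1 (xa i) (xb i)| ≤ |c i| + r * (norm2 (xa i) * norm2 (xb i)) := by
      have h1 := le_abs_self (c i)
      have h2 := neg_abs_le (c i)
      exact abs_le.2 ⟨by linarith, by linarith⟩
    have hsq : (c i - qForm A.1 (xa i) (xb i)) ^ 2
        ≤ (|c i| + r * (norm2 (xa i) * norm2 (xb i))) ^ 2 := by
      rw [← sq_abs]
      exact pow_le_pow_left₀ (abs_nonneg _) habs 2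
    have h1 : sgn (s i) * g (c i) * (c i - qForm A.1 (xa i) (xb i)) ^ 2
        ≤ g (c i) * (c i - qForm A.1 (xa i) (xb i)) ^ 2 := by
      cases (s i) <;> simp [sgn] <;>
        nlinarith [(hg (c i)).1, sq_nonneg (c i - qForm A.1 (xa i) (xb i))]
    refine h1.trans ?_
    calc g (c i) * (c i - qForm A.1 (xa i) (xb i)) ^ 2
        ≤ 1 * (|c i| + r * (norm2 (xa i) * norm2 (xb i))) ^ 2 :=
          mul_le_mul (hg (c i)).2 hsq (sq_nonneg _) one_pos.le
      _ = _ := one_mul _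
  calc 2 / ((2*m : ℕ) : ℝ) * ∑ i, sgn (s i) * g (c i) * (c i - qForm A.1 (xa i) (xb i)) ^ 2
      ≤ 2 / ((2*m : ℕ) : ℝ) * ∑ i : Fin m, (|c i| + r * (norm2 (xa i) * norm2 (xb i))) ^ 2 :=
        mul_le_mul_of_nonneg_left hsum (co_nonneg m)
    _ ≤ 1 * ∑ i : Fin m, (|c i| + r * (norm2 (xa i) * norm2 (xb i))) ^ 2 :=
        mul_le_mul_of_nonneg_right (co_le_one m) hB0
    _ = _ := one_mul _

set_option maxHeartbeats 1000000 in
lemma Gmeas {d L m' m : ℕ} {r : ℝ} (hr : 0 ≤ r) (ka kb : Fin m → Fin m') :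
    Measurable fun z : Fin m' → Pt d L =>
      ∑ s : Fin m → Bool, ((2:ℝ) ^ m)⁻¹ * ⨆ A : Kls d r,
        2 / ((2*m : ℕ) : ℝ) * ∑ i, sgn (s i) * qForm A.1 (z (ka i)).1 (z (kb i)).1 := by
  haveI : Nonempty (Kls d r) := kls_nonempty hr
  refine Finset.measurable_sum _ fun s _ => ?_
  refine Measurable.const_mul ?_ _
  have h1 : ∀ A : Kls d r, Measurable (fun z : Fin m' → Pt d L =>
      2 / ((2*m : ℕ) : ℝ) * ∑ i, sgn (s i) * qForm A.1 (z (ka i)).1 (z (kb i)).1) := by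
    intro A
    refine Measurable.const_mul ?_ _
    refine Finset.measurable_sum _ fun i _ => ?_
    refine Measurable.const_mul ?_ _
    simp only [qForm]
    refine Finset.measurable_sum _ fun a _ => ?_
    refine Finset.measurable_sum _ fun b _ => ?_
    have ha : Measurable fun z : Fin m' → Pt d L => (z (ka i)).1 a :=
      (measurable_pi_apply a).comp (measurable_fst.comp (measurable_pi_apply (ka i)))
    have hb : Measurable fun z : Fin m' → Pt d L => (z (kb i)).1 b :=
      (measurable_pi_apply b).comp (measurable_fst.comp (measurable_pi_apply (kb i)))
    exact (ha.mul_const _).mul hb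
  have h2 : ∀ z : Fin m' → Pt d L, Continuous (fun A : Kls d r =>
      2 / ((2*m : ℕ) : ℝ) * ∑ i, sgn (s i) * qForm A.1 (z (ka i)).1 (z (kb i)).1) := by
    intro z
    have hcm : Continuous fun B : Matrix (Fin d) (Fin d) ℝ =>
        2 / ((2*m : ℕ) : ℝ) * ∑ i, sgn (s i) * qForm B (z (ka i)).1 (z (kb i)).1 := by
      refine Continuous.mul continuous_const ?_
      refine continuous_finset_sum _ fun i _ => ?_
      refine Continuous.mul continuous_const ?_
      simp only [qForm]
      refine continuous_finset_sum _ fun a _ => ?_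
      refine continuous_finset_sum _ fun b _ => ?_
      exact (continuous_const.mul (continuous_id.matrix_elem a b)).mul continuous_const
    exact hcm.comp continuous_subtype_val
  have h3 : ∀ z : Fin m' → Pt d L, BddAbove (Set.range (fun A : Kls d r =>
      2 / ((2*m : ℕ) : ℝ) * ∑ i, sgn (s i) * qForm A.1 (z (ka i)).1 (z (kb i)).1)) :=
    fun z => bdd_G s _ _ hr
  exact measurable_iSup_K _ h1 h2 h3

theorem stmt10 {d L : ℕ} {r R Lbar : ℝ} (hr : 0 < r) (hR : 0 < R) (hLbar : 0 ≤ Lbar)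
    (g : ℝ → ℝ) (hgm : Measurable g) (hg : ∀ t, 0 ≤ g t ∧ g t ≤ 1)
    (P : Measure (Pt d L)) [IsProbabilityMeasure P]
    (S : Set (Pt d L)) (hSm : MeasurableSet S) (hS1 : P S = 1)
    (hSx : ∀ z ∈ S, norm2 z.1 ≤ R)
    (hSy : ∀ z ∈ S, ∀ z' ∈ S, 0 ≤ ipY z.2 z'.2 ∧ ipY z.2 z'.2 ≤ Lbar)
    (m : ℕ) :
    (∫ z, (∫ eps, (⨆ A : {A : Matrix (Fin d) (Fin d) ℝ // A.PosSemidef ∧ frobNorm A ≤ r},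
        (2 / ((2 * m : ℕ) : ℝ)) * ∑ i : Fin m,
          eps i * g (ipY (z (⟨(i : ℕ), by have := i.isLt; omega⟩ : Fin (2 * m))).2
                         (z (⟨m + (i : ℕ), by have := i.isLt; omega⟩ : Fin (2 * m))).2) *
            (ipY (z (⟨(i : ℕ), by have := i.isLt; omega⟩ : Fin (2 * m))).2
                 (z (⟨m + (i : ℕ), by have := i.isLt; omega⟩ : Fin (2 * m))).2 -
             qForm A.1 (z (⟨(i : ℕ), by have := i.isLt; omega⟩ : Fin (2 * m))).1
                       (z (⟨m + (i : ℕ), by have := i.isLt; omega⟩ : Fin (2 * m))).1) ^ 2)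
        ∂(Measure.pi fun _ : Fin m => radMeasure))
      ∂(Measure.pi fun _ : Fin (2 * m) => P)) ≤
    2 * (r * R ^ 2 + Lbar) *
      ∫ z, (∫ eps, (⨆ A : {A : Matrix (Fin d) (Fin d) ℝ // A.PosSemidef ∧ frobNorm A ≤ r},
        (2 / ((2 * m : ℕ) : ℝ)) * ∑ i : Fin m,
          eps i * qForm A.1 (z (⟨(i : ℕ), by have := i.isLt; omega⟩ : Fin (2 * m))).1
                           (z (⟨m + (i : ℕ), by have := i.isLt; omega⟩ : Fin (2 * m))).1)
        ∂(Measure.pi fun _ : Fin m => radMeasure))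
      ∂(Measure.pi fun _ : Fin (2 * m) => P) := by
  haveI hne : Nonempty (Kls d r) := kls_nonempty hr.le
  rcases Nat.eq_zero_or_pos m with hm0 | hm
  · subst hm0
    simp [ciSup_const]
  simp only [integral_radPi, signsV]
  have hmne : ((m:ℝ)) ≠ 0 := Nat.cast_ne_zero.2 hm.ne'
  have hm2 : (2 : ℝ) / ((2*m : ℕ) : ℝ) = (m : ℝ)⁻¹ := by push_cast; field_simp
  have hco0 : (0:ℝ) ≤ 2 / ((2*m : ℕ) : ℝ) := by rw [hm2]; positivity
  have hco1 : 2 / ((2*m : ℕ) : ℝ) ≤ 1 := by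
    rw [hm2]
    exact inv_le_one_of_one_le₀ (by exact_mod_cast hm)
  obtain ⟨A0, hA0v⟩ : ∃ A : Kls d r, A.1 = 0 :=
    ⟨⟨0, Matrix.PosSemidef.zero, by simp [frobNorm, hr.le]⟩, rfl⟩
  set μ := (Measure.pi fun _ : Fin (2 * m) => P) with hμ
  set Fb : (Fin (2 * m) → Pt d L) → ℝ := fun z =>
    ∑ s : Fin m → Bool, ((2:ℝ) ^ m)⁻¹ *
      ⨆ A : Kls d r, 2 / ((2 * m : ℕ) : ℝ) * ∑ i : Fin m,
        sgn (s i) * g (ipY (z (⟨(i : ℕ), by have := i.isLt; omega⟩ : Fin (2 * m))).2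
                         (z (⟨m + (i : ℕ), by have := i.isLt; omega⟩ : Fin (2 * m))).2) *
          (ipY (z (⟨(i : ℕ), by have := i.isLt; omega⟩ : Fin (2 * m))).2
               (z (⟨m + (i : ℕ), by have := i.isLt; omega⟩ : Fin (2 * m))).2 -
           qForm A.1 (z (⟨(i : ℕ), by have := i.isLt; omega⟩ : Fin (2 * m))).1
                     (z (⟨m + (i : ℕ), by have := i.isLt; omega⟩ : Fin (2 * m))).1) ^ 2 with hFb
  set Gb : (Fin (2 * m) → Pt d L) → ℝ := fun z =>
    ∑ s : Fin m → Bool, ((2:ℝ) ^ m)⁻¹ *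
      ⨆ A : Kls d r, 2 / ((2 * m : ℕ) : ℝ) * ∑ i : Fin m,
        sgn (s i) * qForm A.1 (z (⟨(i : ℕ), by have := i.isLt; omega⟩ : Fin (2 * m))).1
                     (z (⟨m + (i : ℕ), by have := i.isLt; omega⟩ : Fin (2 * m))).1 with hGb
  show (∫ z, Fb z ∂μ) ≤ 2 * (r * R ^ 2 + Lbar) * ∫ z, Gb z ∂μ
  haveI hPμ : IsProbabilityMeasure μ := by rw [hμ]; infer_instance
  set T : Set (Fin (2 * m) → Pt d L) := Set.univ.pi fun _ => S with hT
  have hTmeas : MeasurableSet T := MeasurableSet.univ_pi fun _ => hSm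
  have hTae : ∀ᵐ z ∂μ, z ∈ T := by
    have h1 : μ T = 1 := by
      rw [hμ, hT, Measure.pi_pi]
      simp [hS1]
    have h2 : μ Tᶜ = 0 := by
      rw [measure_compl hTmeas (by rw [h1]; exact ENNReal.one_ne_top), h1, measure_univ,
        tsub_self]
    exact MeasureTheory.ae_iff.2 h2
  have hG0 : ∀ z, 0 ≤ Gb z := by
    intro z
    rw [hGb]
    refine Finset.sum_nonneg fun s _ => ?_
    refine mul_nonneg (by positivity) ?_
    have hb := bdd_G (r := r) s (fun i => (z (⟨(i : ℕ), by have := i.isLt; omega⟩ : Fin (2 * m))).1) (fun i => (z (⟨m + (i : ℕ), by have := i.isLt; omega⟩ : Fin (2 * m))).1) hr.le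
    refine le_trans (le_of_eq ?_) (le_ciSup hb A0)
    simp only [hA0v, qForm_zero, mul_zero]
    simp
  have hGle : ∀ z, z ∈ T → Gb z ≤ r * R ^ 2 := by
    intro z hz
    have hzS : ∀ k, z k ∈ S := fun k => hz k (Set.mem_univ k)
    rw [hGb]
    have hsup : ∀ s : Fin m → Bool, (⨆ A : Kls d r, 2 / ((2 * m : ℕ) : ℝ) * ∑ i : Fin m,
        sgn (s i) * qForm A.1 (z (⟨(i : ℕ), by have := i.isLt; omega⟩ : Fin (2 * m))).1 (z (⟨m + (i : ℕ), by have := i.isLt; omega⟩ : Fin (2 * m))).1) ≤ r * R ^ 2 := by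
      intro s
      refine ciSup_le fun A => ?_
      have hsum : ∑ i : Fin m, sgn (s i) * qForm A.1 (z (⟨(i : ℕ), by have := i.isLt; omega⟩ : Fin (2 * m))).1 (z (⟨m + (i : ℕ), by have := i.isLt; omega⟩ : Fin (2 * m))).1
          ≤ ∑ _i : Fin m, r * R ^ 2 := by
        refine Finset.sum_le_sum fun i _ => ?_
        refine (sgn_mul_le_abs _ _).trans ?_
        exact q_bound hr.le hR.le A (hSx _ (hzS _)) (hSx _ (hzS _))
      have hconst : ∑ _i : Fin m, (r * R ^ 2) = (m : ℝ) * (r * R ^ 2) := by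
        rw [Finset.sum_const, Finset.card_univ]
        simp [nsmul_eq_mul]
      calc 2 / ((2 * m : ℕ) : ℝ) * ∑ i : Fin m, sgn (s i) * qForm A.1 (z (⟨(i : ℕ), by have := i.isLt; omega⟩ : Fin (2 * m))).1 (z (⟨m + (i : ℕ), by have := i.isLt; omega⟩ : Fin (2 * m))).1
          ≤ 2 / ((2 * m : ℕ) : ℝ) * ((m : ℝ) * (r * R ^ 2)) := by
            refine mul_le_mul_of_nonneg_left (hsum.trans (le_of_eq hconst)) hco0
        _ = r * R ^ 2 := by rw [hm2]; field_simp
    refine le_trans (Finset.sum_le_sum fun s _ =>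
      mul_le_mul_of_nonneg_left (hsup s) (by positivity)) ?_
    rw [Finset.sum_const, Finset.card_univ]
    rw [Fintype.card_fun]
    simp only [Fintype.card_fin, Fintype.card_bool, nsmul_eq_mul]
    rw [show (((2:ℕ)^m : ℕ) : ℝ) = (2:ℝ)^m by push_cast; ring]
    rw [← mul_assoc, mul_inv_cancel₀ (by positivity), one_mul]
  have hF0 : ∀ z, 0 ≤ Fb z := by
    intro z
    rw [hFb]
    have hzero : ∑ s : Fin m → Bool, ((2:ℝ) ^ m)⁻¹ * (2 / ((2 * m : ℕ) : ℝ) * ∑ i : Fin m,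
        sgn (s i) * (g (ipY (z (⟨(i : ℕ), by have := i.isLt; omega⟩ : Fin (2 * m))).2 (z (⟨m + (i : ℕ), by have := i.isLt; omega⟩ : Fin (2 * m))).2) * (ipY (z (⟨(i : ℕ), by have := i.isLt; omega⟩ : Fin (2 * m))).2 (z (⟨m + (i : ℕ), by have := i.isLt; omega⟩ : Fin (2 * m))).2) ^ 2)) = 0 :=
      sum_signs_weighted _ _ _
    rw [← hzero]
    refine Finset.sum_le_sum fun s _ => ?_
    refine mul_le_mul_of_nonneg_left ?_ (by positivity)
    have hb := bdd_F (r := r) s g hg (fun i => ipY (z (⟨(i : ℕ), by have := i.isLt; omega⟩ : Fin (2 * m))).2 (z (⟨m + (i : ℕ), by have := i.isLt; omega⟩ : Fin (2 * m))).2)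
      (fun i => (z (⟨(i : ℕ), by have := i.isLt; omega⟩ : Fin (2 * m))).1) (fun i => (z (⟨m + (i : ℕ), by have := i.isLt; omega⟩ : Fin (2 * m))).1) hr.le
    refine le_trans (le_of_eq ?_) (le_ciSup hb A0)
    congr 1
    refine Finset.sum_congr rfl fun i _ => ?_
    simp only [hA0v, qForm_zero, sub_zero]
    ring
  have hFG : ∀ z, z ∈ T → Fb z ≤ 2 * (r * R ^ 2 + Lbar) * Gb z := by
    intro z hz
    have hzS : ∀ k, z k ∈ S := fun k => hz k (Set.mem_univ k)
    rw [hFb, hGb]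
    exact main_ineq hr hR hLbar g hg hm
      (fun i => ipY (z (⟨(i : ℕ), by have := i.isLt; omega⟩ : Fin (2 * m))).2 (z (⟨m + (i : ℕ), by have := i.isLt; omega⟩ : Fin (2 * m))).2)
      (fun i => (z (⟨(i : ℕ), by have := i.isLt; omega⟩ : Fin (2 * m))).1) (fun i => (z (⟨m + (i : ℕ), by have := i.isLt; omega⟩ : Fin (2 * m))).1)
      (fun i => hSy _ (hzS _) _ (hzS _))
      (fun i => hSx _ (hzS _)) (fun i => hSx _ (hzS _))
  have hGmeas : Measurable Gb := by
    rw [hGb]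
    exact Gmeas hr.le (fun i : Fin m => (⟨(i : ℕ), by have := i.isLt; omega⟩ : Fin (2 * m)))
      (fun i : Fin m => (⟨m + (i : ℕ), by have := i.isLt; omega⟩ : Fin (2 * m)))
  have hGint : Integrable Gb μ := by
    refine Integrable.mono' (integrable_const (r * R ^ 2)) hGmeas.aestronglyMeasurable ?_
    refine hTae.mono fun z hz => ?_
    rw [Real.norm_eq_abs, abs_of_nonneg (hG0 z)]
    exact hGle z hz
  refine le_trans (integral_mono_of_nonneg (Filter.Eventually.of_forall hF0)
    (hGint.const_mul (2 * (r * R ^ 2 + Lbar))) (hTae.mono fun z hz => hFG z hz))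
    (le_of_eq (integral_const_mul _ _))



end
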